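/- Let F be a finite field with q elements and let C ⊆ (Fin N → F) be a linear code of dimension K ≥ 1 whose minimum distance equals D, and suppose C is maximum distance separable, i.e., K + D = N + 1. Then the number of codewords of C of Hamming weight exactly D equals binomial(N, K−1) · (q − 1). -/

import Mathlib

set_option linter.unusedSectionVars false

open Finset

section Aux

variable {N : ℕ} {F : Type*} [Field F] [Fintype F] [DecidableEq F]

lemma supp_eq_of_vanish (C : Submodule F (Fin N → F)) (D : ℕ)
    (hlow : ∀ c ∈ C, c ≠ 0 → D ≤ hammingNorm c)
    (S : Finset (Fin N)) (hS : S.card = D)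
    {v : Fin N → F} (hvC : v ∈ C) (hv0 : v ≠ 0) (hvan : ∀ i ∉ S, v i = 0) :
    Finset.univ.filter (fun i => v i ≠ 0) = S := by
  have hsub : Finset.univ.filter (fun i => v i ≠ 0) ⊆ S := by
    intro i hi
    simp only [mem_filter] at hi
    by_contra h
    exact hi.2 (hvan i h)
  have hle : S.card ≤ (Finset.univ.filter (fun i => v i ≠ 0)).card := by
    have := hlow v hvC hv0
    simpa [hS, hammingNorm] using this
  exact Finset.eq_of_subset_of_card_le hsub hle

lemma key_count (C : Submodule F (Fin N → F)) (K D : ℕ)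
    (hlow : ∀ c ∈ C, c ≠ 0 → D ≤ hammingNorm c)
    (hK : Module.finrank F C = K) (hD1 : 1 ≤ D)
    (S : Finset (Fin N)) (hS : S.card = D)
    (hlt : N - D < K) [DecidablePred (· ∈ C)] :
    (Finset.univ.filter (fun c : Fin N → F =>
        c ∈ C ∧ Finset.univ.filter (fun i => c i ≠ 0) = S)).card
      = Fintype.card F - 1 := by
  classical
  -- the restriction map to coordinates outside S
  let φ : C →ₗ[F] (↥(Sᶜ : Finset (Fin N)) → F) :=
    (LinearMap.funLeft F F (Subtype.val : ↥(Sᶜ : Finset (Fin N)) → Fin N)).comp C.subtype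
  have hker : LinearMap.ker φ ≠ ⊥ := by
    intro hbot
    have h1 := LinearMap.finrank_range_add_finrank_ker φ
    have h2 : Module.finrank F (LinearMap.range φ) ≤ N - S.card := by
      have := Submodule.finrank_le (LinearMap.range φ)
      simpa [Module.finrank_fintype_fun_eq_card] using this
    rw [hbot, finrank_bot, hK] at h1
    omega
  obtain ⟨u, huker, hu0⟩ := (Submodule.ne_bot_iff _).mp hker
  have huC : (u : Fin N → F) ∈ C := u.2
  have huval0 : (u : Fin N → F) ≠ 0 := by
    simpa [Submodule.coe_eq_zero] using hu0
  have hvan : ∀ i ∉ S, (u : Fin N → F) i = 0 := by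
    intro i hi
    have := congrFun (LinearMap.mem_ker.mp huker) ⟨i, by simpa using hi⟩
    simpa [φ] using this
  have hsupp : Finset.univ.filter (fun i => (u : Fin N → F) i ≠ 0) = S :=
    supp_eq_of_vanish C D hlow S hS huC huval0 hvan
  obtain ⟨i₀, hi₀⟩ : S.Nonempty := Finset.card_pos.mp (by omega)
  have hui₀ : (u : Fin N → F) i₀ ≠ 0 := by
    have h : i₀ ∈ Finset.univ.filter (fun i => (u : Fin N → F) i ≠ 0) := by
      rw [hsupp]; exact hi₀
    exact (Finset.mem_filter.mp h).2
  have himg : Finset.univ.filter (fun c : Fin N → F =>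
        c ∈ C ∧ Finset.univ.filter (fun i => c i ≠ 0) = S)
      = (Finset.univ.erase (0 : F)).image (fun a => a • (u : Fin N → F)) := by
    ext c
    simp only [Finset.mem_filter, Finset.mem_univ, true_and, Finset.mem_image,
      Finset.mem_erase, and_true]
    constructor
    · rintro ⟨hcC, hcsupp⟩
      have hci₀ : c i₀ ≠ 0 := by
        have h : i₀ ∈ Finset.univ.filter (fun i => c i ≠ 0) := by
          rw [hcsupp]; exact hi₀
        exact (Finset.mem_filter.mp h).2
      have hcvan : ∀ i ∉ S, c i = 0 := by
        intro i hi
        by_contra h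
        exact hi (hcsupp ▸ Finset.mem_filter.mpr ⟨Finset.mem_univ _, h⟩)
      set a : F := c i₀ / (u : Fin N → F) i₀ with ha
      refine ⟨a, by simp [ha, div_eq_zero_iff, hui₀, hci₀], ?_⟩
      by_contra hne
      have hwC : c - a • (u : Fin N → F) ∈ C := C.sub_mem hcC (C.smul_mem a huC)
      have hw0 : c - a • (u : Fin N → F) ≠ 0 := by
        intro h
        exact hne (sub_eq_zero.mp h).symm
      have hwvan : ∀ i ∉ S, (c - a • (u : Fin N → F)) i = 0 := by
        intro i hi
        simp [hcvan i hi, hvan i hi]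
      have hwsupp := supp_eq_of_vanish C D hlow S hS hwC hw0 hwvan
      have hwi₀ : (c - a • (u : Fin N → F)) i₀ ≠ 0 := by
        have h : i₀ ∈ Finset.univ.filter
            (fun i => (c - a • (u : Fin N → F)) i ≠ 0) := by
          rw [hwsupp]; exact hi₀
        exact (Finset.mem_filter.mp h).2
      apply hwi₀
      simp only [Pi.sub_apply, Pi.smul_apply, smul_eq_mul, ha]
      field_simp
      simp
    · rintro ⟨a, ha0, rfl⟩
      have hne : a • (u : Fin N → F) ≠ 0 := smul_ne_zero ha0 huval0
      exact ⟨C.smul_mem a huC,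
        supp_eq_of_vanish C D hlow S hS (C.smul_mem a huC) hne
          (fun i hi => by simp [hvan i hi])⟩
  rw [himg, Finset.card_image_of_injective _
      (fun a b hab => by
        have h : (a - b) • (u : Fin N → F) = 0 := by rw [sub_smul, hab, sub_self]
        have := (smul_eq_zero.mp h).resolve_right huval0
        exact sub_eq_zero.mp this),
    Finset.card_erase_of_mem (Finset.mem_univ _), Finset.card_univ]

end Aux

/-- The minimum distance of a linear code `C`: the least Hamming weight of a
nonzero codeword of `C`. -/
noncomputable def minDist {N : ℕ} {F : Type*} [Field F] [Fintype F] [DecidableEq F]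
    (C : Submodule F (Fin N → F)) : ℕ :=
  sInf {w : ℕ | ∃ c ∈ C, c ≠ 0 ∧ hammingNorm c = w}

/-- `A_w(C)`: the number of codewords of `C` of Hamming weight exactly `w`. -/
noncomputable def weightCount {N : ℕ} {F : Type*} [Field F] [Fintype F] [DecidableEq F]
    (C : Submodule F (Fin N → F)) (w : ℕ) : ℕ :=
  {c : Fin N → F | c ∈ C ∧ hammingNorm c = w}.ncard

/-- an MDS code of dimension `K ≥ 1` and minimum distance `D = N + 1 - K`
has exactly `binomial(N, K-1) · (q - 1)` codewords of minimum weight. -/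
theorem stmt_3 {N : ℕ} {F : Type*} [Field F] [Fintype F] [DecidableEq F]
    (C : Submodule F (Fin N → F)) (K D : ℕ)
    (hK : Module.finrank F C = K) (hK1 : 1 ≤ K)
    (hD : minDist C = D) (hMDS : K + D = N + 1) :
    weightCount C D = Nat.choose N (K - 1) * (Fintype.card F - 1) := by
  classical
  -- K ≤ N
  have hKN : K ≤ N := by
    have h := Submodule.finrank_le C
    rw [hK, Module.finrank_fintype_fun_eq_card, Fintype.card_fin] at h
    exact h
  have hD1 : 1 ≤ D := by omega
  -- lower bound on weight of nonzero codewords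
  have hlow : ∀ c ∈ C, c ≠ 0 → D ≤ hammingNorm c := by
    intro c hc hc0
    rw [← hD]
    exact Nat.sInf_le ⟨c, hc, hc0, rfl⟩
  -- express weightCount as a Finset card
  have hset : {c : Fin N → F | c ∈ C ∧ hammingNorm c = D}
      = ↑(Finset.univ.filter (fun c : Fin N → F => c ∈ C ∧ hammingNorm c = D)) := by
    ext c; simp
  rw [weightCount, hset, Set.ncard_coe_finset]
  -- partition by support
  have hpart : Finset.univ.filter (fun c : Fin N → F => c ∈ C ∧ hammingNorm c = D)
      = (Finset.univ.powersetCard D).biUnion (fun S =>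
          Finset.univ.filter (fun c : Fin N → F =>
            c ∈ C ∧ Finset.univ.filter (fun i => c i ≠ 0) = S)) := by
    ext c
    simp only [Finset.mem_filter, Finset.mem_univ, true_and, Finset.mem_biUnion,
      Finset.mem_powersetCard_univ]
    constructor
    · rintro ⟨hcC, hcw⟩
      exact ⟨Finset.univ.filter (fun i => c i ≠ 0), hcw, hcC, rfl⟩
    · rintro ⟨S, hScard, hcC, hcsupp⟩
      refine ⟨hcC, ?_⟩
      rw [show hammingNorm c = (Finset.univ.filter (fun i => c i ≠ 0)).card from rfl,
        hcsupp, hScard]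
  rw [hpart, Finset.card_biUnion]
  · have hconst : ∀ S ∈ Finset.univ.powersetCard D,
        (Finset.univ.filter (fun c : Fin N → F =>
          c ∈ C ∧ Finset.univ.filter (fun i => c i ≠ 0) = S)).card
        = Fintype.card F - 1 := by
      intro S hScard
      rw [Finset.mem_powersetCard_univ] at hScard
      exact key_count C K D hlow hK hD1 S hScard (by omega)
    rw [Finset.sum_congr rfl hconst, Finset.sum_const, smul_eq_mul,
      Finset.card_powersetCard, Finset.card_univ, Fintype.card_fin]
    congr 1
    have : D = N - (K - 1) := by omega
    rw [this, Nat.choose_symm (by omega)]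
  · intro S hS T hT hST
    rw [Function.onFun, Finset.disjoint_left]
    intro c hcS hcT
    simp only [Finset.mem_filter] at hcS hcT
    exact hST (hcS.2.2.symm.trans hcT.2.2)
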